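/- Let λ ≥ 1, and let Y have density f(y) = e^{-(1/2)|y|^λ}/(2^{1+1/λ}Γ(1+1/λ)). Let d_θ₂(y) = -(1/2){|y|^λ log|y| - (2/λ²)ν} with ν = log 2 + ψ(1+1/λ), and d_σ(y) = (λ/2)|y|^λ - 1. Then E[d_θ₂(Y)·d_σ(Y)] = -(1+ν)/λ. -/

import Mathlib

open MeasureTheory Real

/-- The standardized exponential power density (APD with `θ₁ = 1/2`, `θ₂ = l`). -/
noncomputable def epdDensity (l y : ℝ) : ℝ :=
  Real.exp (-(1 / 2) * |y| ^ l) / ((2 : ℝ) ^ (1 + 1 / l) * Real.Gamma (1 + 1 / l))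

/-- The digamma function `ψ(x) = (log ∘ Γ)'(x)`. -/
noncomputable def digamma (x : ℝ) : ℝ :=
  deriv (fun y : ℝ => Real.log (Real.Gamma y)) x

/-- The trigamma function `ψ'`. -/
noncomputable def trigamma (x : ℝ) : ℝ :=
  deriv digamma x

/-- The score component `d_{θ₂}` evaluated at the null `θ₀ = (1/2, l)`. -/
noncomputable def dTheta2 (l y : ℝ) : ℝ :=
  -(1 / 2) * (|y| ^ l * Real.log |y| - (2 / l ^ 2) * (Real.log 2 + digamma (1 + 1 / l)))

/-- The score component `d_σ`. -/
noncomputable def dSigma (l y : ℝ) : ℝ :=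
  (l / 2) * |y| ^ l - 1

open Set

section helpers

lemma log_abs_le {x : ℝ} (hx : 0 < x) : |Real.log x| ≤ x + 2 * x ^ (-(1/2) : ℝ) := by
  have hrp : 0 < x ^ (-(1/2) : ℝ) := rpow_pos_of_pos hx _
  rcases le_or_gt 1 x with h | h
  · rw [abs_of_nonneg (Real.log_nonneg h)]
    have := Real.log_le_sub_one_of_pos hx
    linarith
  · rw [abs_of_nonpos (Real.log_nonpos hx.le h.le)]
    have h1 := Real.log_le_sub_one_of_pos hrp
    rw [Real.log_rpow hx] at h1
    linarith

lemma integrableOn_rpow_mul_log_mul_exp {p q b : ℝ} (hq : 0 < q) (hp : 1 ≤ p) (hb : 0 < b) :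
    IntegrableOn (fun x => x ^ q * Real.log x * Real.exp (-b * x ^ p)) (Ioi (0:ℝ)) := by
  have h1 : IntegrableOn (fun x => x ^ (q+1) * Real.exp (-b * x ^ p)) (Ioi (0:ℝ)) :=
    integrableOn_rpow_mul_exp_neg_mul_rpow (by linarith) (by linarith) hb
  have h2 : IntegrableOn (fun x => x ^ (q-1/2) * Real.exp (-b * x ^ p)) (Ioi (0:ℝ)) :=
    integrableOn_rpow_mul_exp_neg_mul_rpow (by linarith) (by linarith) hb
  apply Integrable.mono' (h1.add (h2.const_mul 2))
  · apply ContinuousOn.aestronglyMeasurable _ measurableSet_Ioi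
    apply ContinuousOn.mul
    apply ContinuousOn.mul
    · exact continuousOn_id.rpow_const (fun x hx => Or.inl (ne_of_gt hx))
    · exact Real.continuousOn_log.mono (fun x hx => ne_of_gt hx)
    · exact Real.continuous_exp.comp_continuousOn
        ((continuousOn_const.mul (continuousOn_id.rpow_const
          (fun x hx => Or.inl (ne_of_gt hx)))))
  · filter_upwards [ae_restrict_mem measurableSet_Ioi] with x hx
    have hx : (0:ℝ) < x := hx
    have hxq : (0:ℝ) ≤ x ^ q := (rpow_pos_of_pos hx q).le
    have hexp : (0:ℝ) < Real.exp (-b * x ^ p) := Real.exp_pos _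
    have e1 : x ^ (q+1) = x ^ q * x := by rw [rpow_add hx, rpow_one]
    have e2 : x ^ (q-1/2) = x ^ q * x ^ (-(1/2):ℝ) := by
      rw [← rpow_add hx]; ring_nf
    have hb1 := log_abs_le hx
    calc ‖x ^ q * Real.log x * Real.exp (-b * x ^ p)‖
        = x ^ q * |Real.log x| * Real.exp (-b * x ^ p) := by
          rw [Real.norm_eq_abs, abs_mul, abs_mul, abs_of_nonneg hxq, abs_of_pos hexp]
      _ ≤ x ^ q * (x + 2 * x ^ (-(1/2):ℝ)) * Real.exp (-b * x ^ p) := by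
          gcongr
      _ = x ^ (q+1) * Real.exp (-b * x ^ p) + 2 * (x ^ (q-1/2) * Real.exp (-b * x ^ p)) := by
          rw [e1, e2]; ring

lemma deriv_Gamma_integral {s : ℝ} (hs : 0 < s) :
    ∫ t in Ioi (0:ℝ), t ^ (s-1) * Real.log t * Real.exp (-t) = deriv Real.Gamma s := by
  have hs' : 0 < (s:ℂ).re := by simpa using hs
  have h0 := Complex.hasDerivAt_GammaIntegral hs'
  have heq : Complex.Gamma =ᶠ[nhds (s:ℂ)] Complex.GammaIntegral := by
    have hopen : IsOpen {z : ℂ | 0 < z.re} := isOpen_lt continuous_const Complex.continuous_re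
    filter_upwards [hopen.mem_nhds hs'] with z hz
    exact Complex.Gamma_eq_integral hz
  have h1 : HasDerivAt Complex.Gamma
      (∫ t : ℝ in Ioi 0, (t:ℂ) ^ ((s:ℂ) - 1) * (Real.log t * Real.exp (-t))) s :=
    h0.congr_of_eventuallyEq heq
  have h2 := h1.real_of_complex
  have hfun : (fun x : ℝ => (Complex.Gamma (x:ℂ)).re) = Real.Gamma := by
    funext x
    rw [Complex.Gamma_ofReal, Complex.ofReal_re]
  rw [hfun] at h2
  have hI : (∫ t : ℝ in Ioi 0, (t:ℂ) ^ ((s:ℂ) - 1) * (Real.log t * Real.exp (-t)))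
      = ∫ t in Ioi (0:ℝ), ((t ^ (s-1) * Real.log t * Real.exp (-t) : ℝ) : ℂ) := by
    refine setIntegral_congr_fun measurableSet_Ioi (fun t ht => ?_)
    have ht : (0:ℝ) < t := ht
    rw [show ((s:ℂ)-1) = ((s-1:ℝ):ℂ) by push_cast; ring, ← Complex.ofReal_cpow ht.le]
    push_cast
    ring
  have hI2 : (∫ t in Ioi (0:ℝ), ((t ^ (s-1) * Real.log t * Real.exp (-t) : ℝ) : ℂ))
      = ((∫ t in Ioi (0:ℝ), t ^ (s-1) * Real.log t * Real.exp (-t) : ℝ) : ℂ) :=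
    integral_ofReal
  rw [hI, hI2] at h2
  simp only [Complex.ofReal_re] at h2
  exact h2.deriv.symm

lemma integral_rpow_mul_log_mul_exp {p q : ℝ} (hp : 0 < p) (hpq : p < q + 1) :
    ∫ x in Ioi (0:ℝ), x ^ q * Real.log x * Real.exp (-(1/2) * x ^ p)
      = 2 ^ ((q+1)/p) * (1/p^2) *
        (Real.log 2 * Real.Gamma ((q+1)/p) + deriv Real.Gamma ((q+1)/p)) := by
  have hp' : (0:ℝ) < q + 1 := lt_trans hp hpq
  set s := (q+1)/p with hs_def
  have hs1 : 1 < s := (one_lt_div hp).mpr hpq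
  have hs0 : 0 < s := lt_trans one_pos hs1
  set g : ℝ → ℝ := fun y => y ^ q * Real.log y * Real.exp (-(1/2) * y ^ p) with hg
  have e1 : ∫ y in Ioi (0:ℝ), g y
      = ∫ x in Ioi (0:ℝ), (1/p^2) * (x ^ (s-1) * Real.log x * Real.exp (-(1/2) * x)) := by
    rw [← integral_comp_rpow_Ioi g (one_div_ne_zero hp.ne')]
    refine setIntegral_congr_fun measurableSet_Ioi (fun x hx => ?_)
    have hx : (0:ℝ) < x := hx
    have h1 : (x ^ (1/p)) ^ p = x := by
      rw [← rpow_mul hx.le, one_div_mul_cancel hp.ne', rpow_one]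
    have h2 : (x ^ (1/p)) ^ q = x ^ (q/p) := by
      rw [← rpow_mul hx.le]; ring_nf
    have h3 : Real.log (x ^ (1/p)) = (1/p) * Real.log x := Real.log_rpow hx _
    have h4 : x ^ ((1:ℝ)/p - 1) * x ^ (q/p) = x ^ (s-1) := by
      rw [← rpow_add hx, hs_def]; congr 1; field_simp; ring
    rw [hg]
    simp only [smul_eq_mul, abs_of_pos (one_div_pos.mpr hp), h1, h2, h3]
    rw [← h4]; ring
  have e2 : ∫ x in Ioi (0:ℝ), x ^ (s-1) * Real.log x * Real.exp (-(1/2) * x)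
      = 2 ^ s * (Real.log 2 * Real.Gamma s + deriv Real.Gamma s) := by
    have subst := integral_comp_mul_left_Ioi
      (fun x => x ^ (s-1) * Real.log x * Real.exp (-(1/2) * x)) 0 (two_pos (α := ℝ))
    rw [mul_zero, smul_eq_mul] at subst
    have : ∫ x in Ioi (0:ℝ), x ^ (s-1) * Real.log x * Real.exp (-(1/2) * x)
        = 2 * ∫ u in Ioi (0:ℝ),
            (2*u) ^ (s-1) * Real.log (2*u) * Real.exp (-(1/2) * (2*u)) := by
      rw [subst]; ring
    rw [this]
    have e3 : ∫ u in Ioi (0:ℝ), (2*u) ^ (s-1) * Real.log (2*u) * Real.exp (-(1/2) * (2*u))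
        = ∫ u in Ioi (0:ℝ), 2 ^ (s-1) *
            (Real.log 2 * (u ^ (s-1) * Real.exp (-u)) + u ^ (s-1) * Real.log u * Real.exp (-u)) := by
      refine setIntegral_congr_fun measurableSet_Ioi (fun u hu => ?_)
      have hu : (0:ℝ) < u := hu
      rw [mul_rpow (by norm_num) hu.le, Real.log_mul (by norm_num) hu.ne']
      rw [show -(1/2) * (2*u) = -u by ring]
      ring
    rw [e3]
    have hint1 : IntegrableOn (fun u : ℝ => Real.log 2 * (u ^ (s-1) * Real.exp (-u))) (Ioi (0:ℝ)) := by
      apply Integrable.const_mul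
      have := Real.GammaIntegral_convergent hs0
      exact this.congr_fun (fun x hx => by rw [mul_comm]) measurableSet_Ioi
    have hint2 : IntegrableOn (fun u : ℝ => u ^ (s-1) * Real.log u * Real.exp (-u)) (Ioi (0:ℝ)) := by
      have := integrableOn_rpow_mul_log_mul_exp (q := s-1) (p := 1) (b := 1)
        (by linarith) le_rfl one_pos
      simpa [rpow_one] using this
    rw [integral_const_mul, integral_add hint1 hint2, integral_const_mul]
    have hGamma : ∫ u in Ioi (0:ℝ), u ^ (s-1) * Real.exp (-u) = Real.Gamma s := by
      rw [Real.Gamma_eq_integral hs0]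
      exact setIntegral_congr_fun measurableSet_Ioi (fun x hx => by rw [mul_comm])
    rw [hGamma, deriv_Gamma_integral hs0]
    rw [show (2:ℝ) ^ s = 2 * 2 ^ (s-1) by
      nth_rewrite 1 [show s = 1 + (s-1) by ring]
      rw [rpow_add two_pos, rpow_one]]
    ring
  rw [show (∫ x in Ioi (0:ℝ), x ^ q * Real.log x * Real.exp (-(1/2) * x ^ p))
      = ∫ y in Ioi (0:ℝ), g y from rfl, e1, integral_const_mul, e2]
  ring

lemma gamma_diff {x : ℝ} (hx : 0 < x) : DifferentiableAt ℝ Real.Gamma x :=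
  Real.differentiableAt_Gamma (fun m =>
    (lt_of_le_of_lt (neg_nonpos.mpr (Nat.cast_nonneg m)) hx).ne')

lemma deriv_Gamma_add_one {x : ℝ} (hx : 0 < x) :
    deriv Real.Gamma (x+1) = Real.Gamma x + x * deriv Real.Gamma x := by
  have hd1 : DifferentiableAt ℝ Real.Gamma x := gamma_diff hx
  have hd2 : DifferentiableAt ℝ Real.Gamma (x+1) := gamma_diff (by linarith)
  have h1 : HasDerivAt (fun y : ℝ => Real.Gamma (y+1)) (deriv Real.Gamma (x+1) * 1) x :=
    by have := HasDerivAt.comp x hd2.hasDerivAt ((hasDerivAt_id' x).add_const 1); exact this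
  have h2 : HasDerivAt (fun y : ℝ => y * Real.Gamma y)
      (1 * Real.Gamma x + x * deriv Real.Gamma x) x :=
    (hasDerivAt_id x).mul hd1.hasDerivAt
  have heq : (fun y : ℝ => Real.Gamma (y+1)) =ᶠ[nhds x] (fun y : ℝ => y * Real.Gamma y) := by
    filter_upwards [isOpen_Ioi.mem_nhds (show x ∈ Ioi (0:ℝ) from hx)] with y hy
    exact Real.Gamma_add_one (ne_of_gt hy)
  have h3 : HasDerivAt (fun y : ℝ => Real.Gamma (y+1))
      (1 * Real.Gamma x + x * deriv Real.Gamma x) x :=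
    h2.congr_of_eventuallyEq heq
  have := h3.unique h1
  linarith

lemma digamma_eq {x : ℝ} (hx : 0 < x) :
    digamma x = deriv Real.Gamma x / Real.Gamma x := by
  have hG : 0 < Real.Gamma x := Real.Gamma_pos_of_pos hx
  have hlog : HasDerivAt (fun y : ℝ => Real.log (Real.Gamma y))
      (deriv Real.Gamma x / Real.Gamma x) x :=
    (gamma_diff hx).hasDerivAt.log hG.ne'
  exact hlog.deriv

end helpers

theorem dTheta2_dSigma_covariance (l : ℝ) (hl : 1 ≤ l) :
    ∫ y : ℝ, dTheta2 l y * dSigma l y * epdDensity l y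
      = -(1 + (Real.log 2 + digamma (1 + 1 / l))) / l := by
  have hl0 : 0 < l := lt_of_lt_of_le one_pos hl
  have h1l : 0 < 1 + 1/l := by positivity
  have hb : (0:ℝ) < 1/2 := by norm_num
  have hGpos : 0 < Real.Gamma (1 + 1/l) := Real.Gamma_pos_of_pos h1l
  have hg1 : (0:ℝ) < (2:ℝ) ^ ((1:ℝ)/l) := rpow_pos_of_pos two_pos _
  have hpowK : (2:ℝ) ^ (1 + 1/l : ℝ) = 2 * (2:ℝ) ^ ((1:ℝ)/l) := by
    rw [rpow_add two_pos, rpow_one]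
  have hhalf : ∀ x : ℝ, ((1:ℝ)/2) ^ x = (2:ℝ) ^ (-x) := by
    intro x
    rw [one_div, Real.inv_rpow (le_of_lt two_pos), ← Real.rpow_neg (le_of_lt two_pos)]
  have hGpsi : deriv Real.Gamma (1 + 1/l) = digamma (1 + 1/l) * Real.Gamma (1 + 1/l) := by
    rw [digamma_eq h1l]; field_simp
  -- the four basic integrals
  have hJ2 : ∫ x in Ioi (0:ℝ), x ^ (2*l) * Real.log x * Real.exp (-(1/2) * x ^ l)
      = (2*(2 * (2:ℝ) ^ ((1:ℝ)/l))) * (1/l^2) *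
        (Real.log 2 * ((1 + 1/l) * Real.Gamma (1 + 1/l)) +
          (Real.Gamma (1 + 1/l) + (1 + 1/l) * deriv Real.Gamma (1 + 1/l))) := by
    rw [integral_rpow_mul_log_mul_exp hl0 (by linarith),
      show (2*l+1)/l = (1 + 1/l) + 1 by field_simp; ring,
      Real.Gamma_add_one h1l.ne', deriv_Gamma_add_one h1l,
      rpow_add two_pos, rpow_one, hpowK]
    ring
  have hJ1 : ∫ x in Ioi (0:ℝ), x ^ l * Real.log x * Real.exp (-(1/2) * x ^ l)
      = (2 * (2:ℝ) ^ ((1:ℝ)/l)) * (1/l^2) *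
        (Real.log 2 * Real.Gamma (1 + 1/l) + deriv Real.Gamma (1 + 1/l)) := by
    rw [integral_rpow_mul_log_mul_exp hl0 (by linarith),
      show (l+1)/l = 1 + 1/l by field_simp, hpowK]
  have hI1 : ∫ x in Ioi (0:ℝ), x ^ l * Real.exp (-(1/2) * x ^ l)
      = (2 * (2:ℝ) ^ ((1:ℝ)/l)) * (1/l) * Real.Gamma (1 + 1/l) := by
    rw [integral_rpow_mul_exp_neg_mul_rpow hl0 (by linarith) hb,
      show (l+1)/l = 1 + 1/l by field_simp, hhalf,
      show (-(-(l+1)/l) : ℝ) = 1 + 1/l by field_simp, hpowK]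
  have hI0 : ∫ x in Ioi (0:ℝ), Real.exp (-(1/2) * x ^ l)
      = (2:ℝ) ^ ((1:ℝ)/l) * Real.Gamma (1 + 1/l) := by
    rw [integral_exp_neg_mul_rpow hl0 hb, hhalf,
      show (-(1:ℝ)/l) = -((1:ℝ)/l) by ring, neg_neg,
      show (1:ℝ)/l + 1 = 1 + 1/l by ring]
  -- integrability
  have int2 : IntegrableOn (fun x => x ^ (2*l) * Real.log x * Real.exp (-(1/2) * x ^ l))
      (Ioi (0:ℝ)) := integrableOn_rpow_mul_log_mul_exp (by positivity) hl hb
  have int1 : IntegrableOn (fun x => x ^ l * Real.log x * Real.exp (-(1/2) * x ^ l))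
      (Ioi (0:ℝ)) := integrableOn_rpow_mul_log_mul_exp hl0 hl hb
  have ie1 : IntegrableOn (fun x => x ^ l * Real.exp (-(1/2) * x ^ l)) (Ioi (0:ℝ)) :=
    integrableOn_rpow_mul_exp_neg_mul_rpow (by linarith) hl0 hb
  have ie0 : IntegrableOn (fun x => Real.exp (-(1/2) * x ^ l)) (Ioi (0:ℝ)) := by
    simpa using integrableOn_rpow_mul_exp_neg_mul_rpow (s := 0) (by norm_num) hl0 hb
  -- reduce to Ioi 0
  rw [show (fun y : ℝ => dTheta2 l y * dSigma l y * epdDensity l y)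
      = (fun y : ℝ => dTheta2 l |y| * dSigma l |y| * epdDensity l |y|) from
    funext fun y => by simp [dTheta2, dSigma, epdDensity, abs_abs],
    integral_comp_abs (f := fun x => dTheta2 l x * dSigma l x * epdDensity l x)]
  -- expand the integrand
  set K := (2:ℝ)^(1 + 1/l : ℝ) * Real.Gamma (1 + 1/l) with hK_def
  set cA := -(l/4) / K with hcA
  set cB := 1 / (2 * K) with hcB
  set cC := (Real.log 2 + digamma (1 + 1/l)) / (2 * l * K) with hcC
  set cD := -(Real.log 2 + digamma (1 + 1/l)) / (l^2 * K) with hcD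
  have hsplit : ∫ x in Ioi (0:ℝ), dTheta2 l x * dSigma l x * epdDensity l x
      = ∫ x in Ioi (0:ℝ),
        (cA * (x ^ (2*l) * Real.log x * Real.exp (-(1/2) * x ^ l))
          + cB * (x ^ l * Real.log x * Real.exp (-(1/2) * x ^ l))
          + cC * (x ^ l * Real.exp (-(1/2) * x ^ l))
          + cD * (Real.exp (-(1/2) * x ^ l))) := by
    refine setIntegral_congr_fun measurableSet_Ioi (fun x hx => ?_)
    have hx : (0:ℝ) < x := hx
    have habs : |x| = x := abs_of_pos hx
    have hx2l : x ^ (2*l) = x ^ l * x ^ l := by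
      rw [show 2*l = l + l by ring, rpow_add hx]
    have hKpos : 0 < K := by rw [hK_def]; positivity
    simp only [dTheta2, dSigma, epdDensity, habs, hcA, hcB, hcC, hcD, ← hK_def]
    rw [hx2l]
    field_simp
    ring
  have iA : IntegrableOn
      (fun x => cA * (x ^ (2*l) * Real.log x * Real.exp (-(1/2) * x ^ l))) (Ioi (0:ℝ)) :=
    int2.const_mul _
  have iB : IntegrableOn
      (fun x => cB * (x ^ l * Real.log x * Real.exp (-(1/2) * x ^ l))) (Ioi (0:ℝ)) :=
    int1.const_mul _
  have iC : IntegrableOn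
      (fun x => cC * (x ^ l * Real.exp (-(1/2) * x ^ l))) (Ioi (0:ℝ)) :=
    ie1.const_mul _
  have iD : IntegrableOn
      (fun x => cD * (Real.exp (-(1/2) * x ^ l))) (Ioi (0:ℝ)) :=
    ie0.const_mul _
  have iAB : IntegrableOn
      (fun x => cA * (x ^ (2*l) * Real.log x * Real.exp (-(1/2) * x ^ l))
        + cB * (x ^ l * Real.log x * Real.exp (-(1/2) * x ^ l))) (Ioi (0:ℝ)) := iA.add iB
  have iABC : IntegrableOn
      (fun x => cA * (x ^ (2*l) * Real.log x * Real.exp (-(1/2) * x ^ l))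
        + cB * (x ^ l * Real.log x * Real.exp (-(1/2) * x ^ l))
        + cC * (x ^ l * Real.exp (-(1/2) * x ^ l))) (Ioi (0:ℝ)) := iAB.add iC
  have hKpos : 0 < K := by rw [hK_def]; positivity
  rw [hsplit, integral_add iABC iD, integral_add iAB iC, integral_add iA iB,
    integral_const_mul, integral_const_mul, integral_const_mul, integral_const_mul,
    hJ2, hJ1, hI1, hI0, hGpsi, hcA, hcB, hcC, hcD, hK_def, hpowK]
  have hGne := hGpos.ne'
  have hg1ne := hg1.ne'
  have hlne := hl0.ne'
  field_simp
  ring
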